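/- Let π = ℂ^n be the standard representation of gl_n with highest weight vector v_0, and let w_0 = (v_0 ⊗ ... ⊗ v_0) ⊗ 1 ∈ π^{⊗N} ⊗ ℂ[z_1,...,z_N]. Then the S_N-invariant subspace (π^{⊗N} ⊗ ℂ[z_1,...,z_N])^{S_N} (diagonal S_N-action) equals U(gl_n ⊗ ℂ[t]) · w_0, where x ⊗ t^k acts on the i-th tensor factor by x ⊗ multiplication by z_i^k, summed over i. -/

import Mathlib

open MvPolynomial Finset

/-- The model for `π^{⊗N} ⊗ ℂ[z_1,…,z_N]` with `π = ℂ^n`: functions on words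
`w : Fin N → Fin n` (the standard tensor basis of `π^{⊗N}`) with values in
`ℂ[z_1,…,z_N]`. -/
abbrev VN (N n : ℕ) : Type := (Fin N → Fin n) → MvPolynomial (Fin N) ℂ

/-- The diagonal action of `σ ∈ S_N`, permuting tensor factors and polynomial
variables simultaneously. -/
noncomputable def diagAct {N n : ℕ} (σ : Equiv.Perm (Fin N)) (F : VN N n) : VN N n :=
  fun w => MvPolynomial.rename (⇑σ) (F (w ∘ ⇑σ))

/-- The cyclic vector `w₀ = v₀ ⊗ ⋯ ⊗ v₀ ⊗ 1`. -/
noncomputable def w0 (N n : ℕ) [NeZero n] : VN N n :=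
  fun w => if w = (fun _ => (0 : Fin n)) then 1 else 0

/-- The action of the current algebra element `x ⊗ t^k` on the tensor product of
formal evaluation modules: `x` acts in the `i`-th tensor factor together with
multiplication by `z_i^k`, summed over `i`. -/
noncomputable def currentOp {N n : ℕ} (x : Matrix (Fin n) (Fin n) ℂ) (k : ℕ)
    (F : VN N n) : VN N n :=
  fun v => ∑ i : Fin N, MvPolynomial.X i ^ k *
    ∑ a : Fin n, MvPolynomial.C (x (v i) a) * F (Function.update v i a)

namespace S8
variable {N n : ℕ}

lemma sum_lt_sum_single {g h : Fin N → ℕ} (i0 : Fin N)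
    (heq : ∀ j, j ≠ i0 → g j = h j) (hlt : g i0 < h i0) : ∑ j, g j < ∑ j, h j := by
  rw [← Finset.sum_erase_add _ g (Finset.mem_univ i0),
      ← Finset.sum_erase_add _ h (Finset.mem_univ i0)]
  exact add_lt_add_of_le_of_lt
    (le_of_eq (Finset.sum_congr rfl fun j hj => heq j (Finset.ne_of_mem_erase hj))) hlt

lemma sum_lt_sum_two {g h : Fin N → ℕ} (i i0 : Fin N) (hne : i ≠ i0)
    (heq : ∀ j, j ≠ i → j ≠ i0 → g j = h j) (hlt : g i + g i0 < h i + h i0) :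
    ∑ j, g j < ∑ j, h j := by
  have hmem : i ∈ Finset.univ.erase i0 := Finset.mem_erase.2 ⟨hne, Finset.mem_univ i⟩
  rw [← Finset.sum_erase_add _ g (Finset.mem_univ i0),
      ← Finset.sum_erase_add _ h (Finset.mem_univ i0),
      ← Finset.sum_erase_add _ g hmem, ← Finset.sum_erase_add _ h hmem,
      add_assoc, add_assoc]
  refine add_lt_add_of_le_of_lt (le_of_eq (Finset.sum_congr rfl fun j hj => ?_)) hlt
  exact heq j (Finset.ne_of_mem_erase hj) (Finset.ne_of_mem_erase (Finset.mem_of_mem_erase hj))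

lemma mem_of_nsmul_mem {V : Type*} [AddCommGroup V] [Module ℂ V] {p : Submodule ℂ V}
    {v : V} {c : ℕ} (hc : c ≠ 0) (h : c • v ∈ p) : v ∈ p := by
  have h2 := p.smul_mem ((c : ℂ)⁻¹) (by rwa [← Nat.cast_smul_eq_nsmul ℂ] at h)
  rwa [inv_smul_smul₀ (by exact_mod_cast hc) v] at h2

/-! ### Linear structure of the operators -/

noncomputable def diagActL (σ : Equiv.Perm (Fin N)) : VN N n →ₗ[ℂ] VN N n where
  toFun := diagAct σ
  map_add' F G := by funext v; simp [diagAct]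
  map_smul' c F := by funext v; simp [diagAct]

noncomputable def currentOpL (x : Matrix (Fin n) (Fin n) ℂ) (k : ℕ) : VN N n →ₗ[ℂ] VN N n where
  toFun := currentOp x k
  map_add' F G := by
    funext v
    simp [currentOp, mul_add, Finset.sum_add_distrib]
  map_smul' c F := by
    funext v
    simp only [currentOp, Pi.smul_apply, MvPolynomial.smul_eq_C_mul, RingHom.id_apply,
      Finset.mul_sum]
    exact Finset.sum_congr rfl fun i _ => Finset.sum_congr rfl fun a _ => by ring

lemma diagAct_sum {ι : Type*} (σ : Equiv.Perm (Fin N)) (s : Finset ι) (G : ι → VN N n) :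
    diagAct σ (∑ i ∈ s, G i) = ∑ i ∈ s, diagAct σ (G i) :=
  map_sum (diagActL σ) G s

lemma diagAct_smul (σ : Equiv.Perm (Fin N)) (c : ℂ) (F : VN N n) :
    diagAct σ (c • F) = c • diagAct σ F :=
  map_smul (diagActL σ) c F

lemma currentOp_sum {ι : Type*} (x : Matrix (Fin n) (Fin n) ℂ) (k : ℕ) (s : Finset ι)
    (G : ι → VN N n) : currentOp x k (∑ i ∈ s, G i) = ∑ i ∈ s, currentOp x k (G i) :=
  map_sum (currentOpL x k) G s

/-! ### Basic action lemmas -/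

lemma diagAct_mul (σ τ : Equiv.Perm (Fin N)) (F : VN N n) :
    diagAct σ (diagAct τ F) = diagAct (σ * τ) F := by
  funext v
  simp only [diagAct, rename_rename]
  rfl

lemma diagAct_w0 [NeZero n] (σ : Equiv.Perm (Fin N)) : diagAct σ (w0 N n) = w0 N n := by
  funext v
  simp only [diagAct, w0]
  by_cases h : v = fun _ => (0 : Fin n)
  · subst h; simp [Function.comp_def]
  · have h2 : (v ∘ ⇑σ) ≠ (fun _ => (0 : Fin n)) := by
      intro hc
      apply h
      funext j
      have := congrFun hc (σ.symm j)
      simpa using this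
    simp [h, h2]

lemma diagAct_currentOp (σ : Equiv.Perm (Fin N)) (x : Matrix (Fin n) (Fin n) ℂ) (k : ℕ)
    (F : VN N n) : diagAct σ (currentOp x k F) = currentOp x k (diagAct σ F) := by
  funext v
  simp only [diagAct, currentOp, map_sum, map_mul, map_pow, rename_X, rename_C]
  rw [← Equiv.sum_comp σ
    (fun i => (X i : MvPolynomial (Fin N) ℂ) ^ k *
      ∑ a : Fin n, C (x (v i) a) * rename (⇑σ) (F (Function.update v i a ∘ ⇑σ)))]
  refine Finset.sum_congr rfl fun i _ => ?_
  congr 1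
  refine Finset.sum_congr rfl fun a _ => ?_
  have h : Function.update v (σ i) a ∘ ⇑σ = Function.update (v ∘ ⇑σ) i a := by
    have := Function.update_comp_equiv v σ (σ i) a
    simpa using this
  rw [h]
  rfl

/-! ### Basis elements and their symmetrizations -/

noncomputable def Ebas (w : Fin N → Fin n) (d : Fin N →₀ ℕ) : VN N n :=
  fun v => if v = w then monomial d 1 else 0

lemma Ebas_zero [NeZero n] : Ebas (fun _ => (0 : Fin n)) (0 : Fin N →₀ ℕ) = w0 N n := by
  funext v
  simp only [Ebas, w0, monomial_zero', C_1]

lemma diagAct_Ebas (τ : Equiv.Perm (Fin N)) (w : Fin N → Fin n) (d : Fin N →₀ ℕ) :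
    diagAct τ (Ebas w d) = Ebas (w ∘ ⇑τ⁻¹) (d.mapDomain ⇑τ) := by
  funext v
  have hiff : v ∘ ⇑τ = w ↔ v = w ∘ ⇑τ⁻¹ := by
    constructor
    · intro h; funext j
      have := congrFun h (τ⁻¹ j); simpa using this
    · intro h; funext j
      have := congrFun h (τ j); simpa using this
  simp only [diagAct, Ebas]
  by_cases h : v ∘ ⇑τ = w
  · rw [if_pos h, if_pos (hiff.1 h), rename_monomial]
  · rw [if_neg h, if_neg (fun hc => h (hiff.2 hc)), map_zero]

noncomputable def Fsym (w : Fin N → Fin n) (d : Fin N →₀ ℕ) : VN N n :=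
  ∑ σ : Equiv.Perm (Fin N), diagAct σ (Ebas w d)

lemma Fsym_relabel (τ : Equiv.Perm (Fin N)) (w : Fin N → Fin n) (d : Fin N →₀ ℕ) :
    Fsym (w ∘ ⇑τ⁻¹) (d.mapDomain ⇑τ) = Fsym w d := by
  unfold Fsym
  rw [← diagAct_Ebas]
  simp_rw [diagAct_mul]
  exact Fintype.sum_equiv (Equiv.mulRight τ) _ _ (fun σ => rfl)

lemma currentOp_Ebas (x : Matrix (Fin n) (Fin n) ℂ) (k : ℕ) (w : Fin N → Fin n)
    (d : Fin N →₀ ℕ) :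
    currentOp x k (Ebas w d) = ∑ i : Fin N, ∑ b : Fin n,
      x b (w i) • Ebas (Function.update w i b) (d + Finsupp.single i k) := by
  funext v
  simp only [currentOp, Ebas, Finset.sum_apply, Pi.smul_apply]
  refine Finset.sum_congr rfl fun i _ => ?_
  by_cases hvw : Function.update v i (w i) = w
  · have hc1 : ∀ c : Fin n, (Function.update v i c = w) ↔ c = w i := by
      intro c
      constructor
      · intro h
        have := congrFun h i
        simpa using this
      · rintro rfl; exact hvw
    have hc2 : ∀ b : Fin n, (v = Function.update w i b) ↔ b = v i := by
      intro b
      constructor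
      · intro h
        have := congrFun h i
        simp at this
        exact this.symm
      · rintro rfl
        funext j
        by_cases hj : j = i
        · subst hj; simp
        · rw [Function.update_of_ne hj]
          have := congrFun hvw j
          rwa [Function.update_of_ne hj] at this
    rw [Finset.sum_eq_single (w i)
      (fun c _ hc => by rw [if_neg (fun h => hc ((hc1 c).1 h)), mul_zero])
      (fun h => absurd (Finset.mem_univ _) h)]
    rw [Finset.sum_eq_single (v i)
      (fun b _ hb => by rw [if_neg (fun h => hb ((hc2 b).1 h)), smul_zero])
      (fun h => absurd (Finset.mem_univ _) h)]
    rw [if_pos ((hc1 (w i)).2 rfl), if_pos ((hc2 (v i)).2 rfl)]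
    rw [C_mul_monomial, X_pow_eq_monomial, monomial_mul, smul_monomial]
    rw [add_comm d (Finsupp.single i k)]
    simp
  · have hc1 : ∀ c : Fin n, Function.update v i c ≠ w := by
      intro c hc
      apply hvw
      have h2 : w i = c := by
        have := congrFun hc i; simpa using this.symm
      rw [h2]; exact hc
    have hc2 : ∀ b : Fin n, v ≠ Function.update w i b := by
      intro b hb
      apply hvw
      rw [hb]
      simp [Function.update_idem]
    simp only [hc1, hc2, if_false, mul_zero, smul_zero, Finset.sum_const_zero, mul_zero]

lemma currentOp_std [NeZero n] (a : Fin n) (k : ℕ) (w : Fin N → Fin n) (d : Fin N →₀ ℕ) :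
    currentOp (Matrix.single a 0 1) k (Ebas w d) =
      ∑ i ∈ univ.filter (fun i => w i = 0),
        Ebas (Function.update w i a) (d + Finsupp.single i k) := by
  rw [currentOp_Ebas, Finset.sum_filter]
  refine Finset.sum_congr rfl fun i _ => ?_
  rw [Finset.sum_eq_single a (fun b _ hb => by
      rw [Matrix.single_apply_of_ne (i := a) (j := (0 : Fin n)) (c := (1 : ℂ)) (i' := b)
          (j' := w i) (fun h => hb h.1.symm), zero_smul])
    (fun h => absurd (Finset.mem_univ _) h)]
  by_cases h0 : w i = 0
  · rw [if_pos h0]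
    simp [Matrix.single, h0]
  · rw [if_neg h0]
    simp [Matrix.single, Ne.symm h0]

lemma currentOp_Fsym [NeZero n] (a : Fin n) (k : ℕ) (w : Fin N → Fin n) (d : Fin N →₀ ℕ) :
    currentOp (Matrix.single a 0 1) k (Fsym w d) =
      ∑ i ∈ univ.filter (fun i => w i = 0),
        Fsym (Function.update w i a) (d + Finsupp.single i k) := by
  unfold Fsym
  rw [currentOp_sum]
  simp_rw [← diagAct_currentOp, currentOp_std, diagAct_sum]
  exact Finset.sum_comm

/-! ### Swap invariance of `Fsym` -/

lemma Fsym_swap [NeZero n] (w : Fin N → Fin n) (d : Fin N →₀ ℕ) (i i0 : Fin N)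
    (hne : i ≠ i0) (hwi : w i = 0) (hdi : d i = 0) :
    Fsym (Function.update (Function.update w i0 0) i (w i0))
      (d.erase i0 + Finsupp.single i (d i0)) = Fsym w d := by
  have key := Fsym_relabel (Equiv.swap i i0) w d
  have hmap : ∀ j, (d.mapDomain ⇑(Equiv.swap i i0)) (Equiv.swap i i0 j) = d j :=
    fun j => Finsupp.mapDomain_apply (Equiv.injective _) d j
  have hswap_eval : ∀ j, (d.mapDomain ⇑(Equiv.swap i i0)) j = d (Equiv.swap i i0 j) := by
    intro j
    conv_lhs => rw [show j = Equiv.swap i i0 (Equiv.swap i i0 j) from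
      (Equiv.swap_apply_self _ _ _).symm]
    exact hmap _
  have harg1 : Function.update (Function.update w i0 0) i (w i0) =
      w ∘ ⇑(Equiv.swap i i0)⁻¹ := by
    funext j
    simp only [Function.comp_apply, Equiv.Perm.inv_def, Equiv.symm_swap]
    by_cases hji : j = i
    · subst hji
      rw [Function.update_self, Equiv.swap_apply_left]
    · rw [Function.update_of_ne hji]
      by_cases hji0 : j = i0
      · subst hji0
        rw [Function.update_self, Equiv.swap_apply_right, hwi]
      · rw [Function.update_of_ne hji0, Equiv.swap_apply_of_ne_of_ne hji hji0]
  have harg2 : d.erase i0 + Finsupp.single i (d i0) = d.mapDomain ⇑(Equiv.swap i i0) := by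
    ext j
    rw [Finsupp.add_apply, hswap_eval]
    by_cases hji : j = i
    · subst hji
      rw [Equiv.swap_apply_left, Finsupp.erase_ne hne, hdi, Finsupp.single_eq_same, zero_add]
    · by_cases hji0 : j = i0
      · subst hji0
        rw [Equiv.swap_apply_right, Finsupp.erase_same,
          Finsupp.single_eq_of_ne' (fun h => hji h.symm), hdi, zero_add]
      · rw [Equiv.swap_apply_of_ne_of_ne hji hji0, Finsupp.erase_ne hji0,
          Finsupp.single_eq_of_ne' (fun h => hji h.symm), add_zero]
  rw [harg1, harg2, ← key]

/-! ### The current-algebra span -/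

noncomputable def M (N n : ℕ) [NeZero n] : Submodule ℂ (VN N n) :=
  Submodule.span ℂ
    {F : VN N n | ∃ l : List (Matrix (Fin n) (Fin n) ℂ × ℕ),
      F = l.foldr (fun p G => currentOp p.1 p.2 G) (w0 N n)}

lemma w0_mem [NeZero n] : w0 N n ∈ M N n :=
  Submodule.subset_span ⟨[], rfl⟩

lemma currentOp_mem [NeZero n] (x : Matrix (Fin n) (Fin n) ℂ) (k : ℕ) {F : VN N n}
    (hF : F ∈ M N n) : currentOp x k F ∈ M N n := by
  induction hF using Submodule.span_induction with
  | mem G hG =>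
    obtain ⟨l, rfl⟩ := hG
    exact Submodule.subset_span ⟨(x, k) :: l, rfl⟩
  | zero =>
    rw [show currentOp x k (0 : VN N n) = 0 from map_zero (currentOpL x k)]
    exact zero_mem _
  | add F G _ _ hF hG =>
    rw [show currentOp x k (F + G) = currentOp x k F + currentOp x k G from
      map_add (currentOpL x k) F G]
    exact add_mem hF hG
  | smul c F _ hF =>
    rw [show currentOp x k (c • F) = c • currentOp x k F from map_smul (currentOpL x k) c F]
    exact Submodule.smul_mem _ _ hF

/-! ### The measure for the induction -/

def fm [NeZero n] : Fin n → ℕ → ℕ := fun b e => if b = 0 then (if e = 0 then 0 else e + 1) else 1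

lemma fm_zero_zero [NeZero n] : fm (0 : Fin n) 0 = 0 := by simp [fm]

lemma fm_zero_ne [NeZero n] {e : ℕ} (he : e ≠ 0) : fm (0 : Fin n) e = e + 1 := by
  simp [fm, he]

lemma fm_ne [NeZero n] {b : Fin n} (hb : b ≠ 0) (e : ℕ) : fm b e = 1 := by simp [fm, hb]

def mu [NeZero n] (w : Fin N → Fin n) (d : Fin N →₀ ℕ) : ℕ := ∑ i, fm (w i) (d i)

/-! ### The main induction -/

lemma Fsym_mem [NeZero n] :
    ∀ (m : ℕ) (w : Fin N → Fin n) (d : Fin N →₀ ℕ), mu w d = m → Fsym w d ∈ M N n := by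
  intro m
  induction m using Nat.strong_induction_on with
  | _ m ih =>
    intro w d hm
    by_cases hbase : ∀ i, w i = 0 ∧ d i = 0
    · have hw : w = fun _ => (0 : Fin n) := funext fun i => (hbase i).1
      have hd : d = 0 := Finsupp.ext fun i => (hbase i).2
      subst hw hd
      rw [Fsym, Ebas_zero]
      exact Submodule.sum_mem _ fun σ _ => by rw [diagAct_w0]; exact w0_mem
    · push_neg at hbase
      obtain ⟨i0, h0⟩ := hbase
      have hmu' : mu (Function.update w i0 (0 : Fin n)) (d.erase i0) < m := by
        rw [← hm]
        refine sum_lt_sum_single i0 (fun j hj => ?_) ?_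
        · rw [Function.update_of_ne hj, Finsupp.erase_ne hj]
        · rw [Function.update_self, Finsupp.erase_same, fm_zero_zero]
          by_cases hai : w i0 = 0
          · have hdi0 : d i0 ≠ 0 := h0 hai
            rw [hai, fm_zero_ne hdi0]
            omega
          · rw [fm_ne hai]
            omega
      have hrec : Fsym (Function.update w i0 (0 : Fin n)) (d.erase i0) ∈ M N n :=
        ih _ hmu' _ _ rfl
      have hkey := currentOp_Fsym (w i0) (d i0) (Function.update w i0 (0 : Fin n)) (d.erase i0)
      set S : Finset (Fin N) :=
        univ.filter (fun i => Function.update w i0 (0 : Fin n) i = 0) with hS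
      set T : Fin N → VN N n := fun i =>
        Fsym (Function.update (Function.update w i0 (0 : Fin n)) i (w i0))
          (d.erase i0 + Finsupp.single i (d i0)) with hT
      have hsplit : ∑ i ∈ S, T i =
          ∑ i ∈ S.filter (fun i => i = i0 ∨ d i = 0), T i +
          ∑ i ∈ S.filter (fun i => ¬(i = i0 ∨ d i = 0)), T i :=
        (Finset.sum_filter_add_sum_filter_not S _ T).symm
      have hfirst : ∀ i ∈ S.filter (fun i => i = i0 ∨ d i = 0), T i = Fsym w d := by
        intro i hi
        rw [Finset.mem_filter] at hi
        obtain ⟨hiS, hcase⟩ := hi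
        by_cases hii0 : i = i0
        · subst hii0
          rw [hT]
          show Fsym (Function.update (Function.update w i (0 : Fin n)) i (w i))
            (d.erase i + Finsupp.single i (d i)) = Fsym w d
          rw [Function.update_idem, Function.update_eq_self, Finsupp.erase_add_single]
        · have hdi : d i = 0 := hcase.resolve_left hii0
          have hwi : w i = 0 := by
            rw [hS, Finset.mem_filter, Function.update_of_ne hii0] at hiS
            exact hiS.2
          exact Fsym_swap w d i i0 hii0 hwi hdi
      have hsecond : ∀ i ∈ S.filter (fun i => ¬(i = i0 ∨ d i = 0)), T i ∈ M N n := by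
        intro i hi
        rw [Finset.mem_filter] at hi
        obtain ⟨hiS, hcase⟩ := hi
        push_neg at hcase
        obtain ⟨hii0, hdi⟩ := hcase
        have hwi : w i = 0 := by
          rw [hS, Finset.mem_filter, Function.update_of_ne hii0] at hiS
          exact hiS.2
        refine ih _ ?_ _ _ rfl
        rw [← hm]
        refine sum_lt_sum_two i i0 hii0 (fun j hji hji0 => ?_) ?_
        · rw [Function.update_of_ne hji, Function.update_of_ne hji0,
            Finsupp.add_apply, Finsupp.erase_ne hji0,
            Finsupp.single_eq_of_ne' (fun h => hji h.symm), add_zero]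
        · rw [Function.update_self, Function.update_of_ne (fun h => hii0 h.symm),
            Function.update_self, Finsupp.add_apply, Finsupp.add_apply,
            Finsupp.erase_ne hii0, Finsupp.erase_same, Finsupp.single_eq_same,
            Finsupp.single_eq_of_ne' hii0, zero_add, hwi]
          rw [fm_zero_zero, fm_zero_ne hdi]
          by_cases hai : w i0 = 0
          · have hdi0 : d i0 ≠ 0 := h0 hai
            rw [hai, fm_zero_ne hdi0, fm_zero_ne (fun h : d i + d i0 = 0 => hdi0 (by omega))]
            omega
          · rw [fm_ne hai, fm_ne hai]
            omega
      have hi0mem : i0 ∈ S.filter (fun i => i = i0 ∨ d i = 0) :=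
        Finset.mem_filter.2 ⟨Finset.mem_filter.2 ⟨Finset.mem_univ i0,
          Function.update_self i0 (0 : Fin n) w⟩, Or.inl rfl⟩
      have hcard : (S.filter (fun i => i = i0 ∨ d i = 0)).card ≠ 0 :=
        Finset.card_ne_zero_of_mem hi0mem
      have hsum1 : ∑ i ∈ S.filter (fun i => i = i0 ∨ d i = 0), T i =
          (S.filter (fun i => i = i0 ∨ d i = 0)).card • Fsym w d := by
        rw [Finset.sum_congr rfl hfirst, Finset.sum_const]
      have heq : (S.filter (fun i => i = i0 ∨ d i = 0)).card • Fsym w d =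
          currentOp (Matrix.single (w i0) 0 1) (d i0)
            (Fsym (Function.update w i0 (0 : Fin n)) (d.erase i0)) -
          ∑ i ∈ S.filter (fun i => ¬(i = i0 ∨ d i = 0)), T i := by
        rw [hkey, hsplit, hsum1]
        abel
      refine mem_of_nsmul_mem hcard ?_
      rw [heq]
      exact sub_mem (currentOp_mem _ _ hrec) (Submodule.sum_mem _ hsecond)

/-! ### Decomposition of an arbitrary element into basis elements -/

lemma decomp (F : VN N n) :
    F = ∑ w : Fin N → Fin n, ∑ d ∈ (F w).support, (F w).coeff d • Ebas w d := by
  funext v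
  simp only [Finset.sum_apply, Pi.smul_apply, Ebas]
  rw [Finset.sum_eq_single v (fun w _ hw => Finset.sum_eq_zero fun d _ => by
      rw [if_neg (fun h : v = w => hw h.symm), smul_zero])
    (fun h => absurd (Finset.mem_univ _) h)]
  simp only [if_pos rfl]
  conv_lhs => rw [← MvPolynomial.support_sum_monomial_coeff (F v)]
  exact Finset.sum_congr rfl fun d _ => by simp [smul_monomial]

end S8

/-- The `S_N`-invariant subspace of `π^{⊗N} ⊗ ℂ[z_1,…,z_N]`
(diagonal action) equals `U(gl_n ⊗ ℂ[t]) · w₀`, i.e. the `ℂ`-linear span of the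
vectors obtained by applying finitely many current algebra operators `x ⊗ t^k`
to the cyclic vector `w₀ = v₀^{⊗N} ⊗ 1`. -/
theorem invariants_eq_current_algebra_span (N n : ℕ) [NeZero n] :
    {F : VN N n | ∀ σ, diagAct σ F = F} =
      (Submodule.span ℂ
        {F : VN N n | ∃ l : List (Matrix (Fin n) (Fin n) ℂ × ℕ),
          F = l.foldr (fun p G => currentOp p.1 p.2 G) (w0 N n)} : Set (VN N n)) := by
  ext F
  simp only [Set.mem_setOf_eq, SetLike.mem_coe]
  constructor
  · intro hF
    show F ∈ S8.M N n
    have hcardpos : 0 < Fintype.card (Equiv.Perm (Fin N)) := Fintype.card_pos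
    have h1 : ∀ σ : Equiv.Perm (Fin N), diagAct σ F = ∑ w : Fin N → Fin n,
        ∑ d ∈ (F w).support, (F w).coeff d • diagAct σ (S8.Ebas w d) := by
      intro σ
      conv_lhs => rw [S8.decomp F]
      rw [S8.diagAct_sum]
      refine Finset.sum_congr rfl fun w _ => ?_
      rw [S8.diagAct_sum]
      exact Finset.sum_congr rfl fun d _ => S8.diagAct_smul σ _ _
    have h2 : (Fintype.card (Equiv.Perm (Fin N))) • F ∈ S8.M N n := by
      have hconst : (Fintype.card (Equiv.Perm (Fin N))) • F =
          ∑ σ : Equiv.Perm (Fin N), diagAct σ F := by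
        simp [hF, Finset.sum_const, Finset.card_univ]
      rw [hconst]
      have h3 : ∑ σ : Equiv.Perm (Fin N), diagAct σ F
          = ∑ w : Fin N → Fin n, ∑ d ∈ (F w).support, (F w).coeff d • S8.Fsym w d := by
        simp_rw [h1]
        rw [Finset.sum_comm]
        refine Finset.sum_congr rfl fun w _ => ?_
        rw [Finset.sum_comm]
        refine Finset.sum_congr rfl fun d _ => ?_
        rw [S8.Fsym, Finset.smul_sum]
      rw [h3]
      exact Submodule.sum_mem _ fun w _ => Submodule.sum_mem _ fun d _ =>
        Submodule.smul_mem _ _ (S8.Fsym_mem _ w d rfl)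
    exact S8.mem_of_nsmul_mem hcardpos.ne' h2
  · intro hF σ
    induction hF using Submodule.span_induction with
    | mem G hG =>
      obtain ⟨l, rfl⟩ := hG
      induction l with
      | nil => exact S8.diagAct_w0 σ
      | cons p l ihl =>
        show diagAct σ (currentOp p.1 p.2 (l.foldr (fun p G => currentOp p.1 p.2 G) (w0 N n))) = _
        rw [S8.diagAct_currentOp, ihl]
        rfl
    | zero => exact map_zero (S8.diagActL σ)
    | add G H _ _ hG hH =>
      rw [show diagAct σ (G + H) = diagAct σ G + diagAct σ H from
        map_add (S8.diagActL σ) G H, hG, hH]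
    | smul c G _ hG =>
      rw [show diagAct σ (c • G) = c • diagAct σ G from map_smul (S8.diagActL σ) c G, hG]
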